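/- Suppose β ∈ ℝ satisfies Φ(β) > 1/2, and suppose X is partitioned into pairwise disjoint sets H̃ = {x ∈ X | m(x) − β·σ(x) > θ}, L̃ = {x ∈ X | m(x) + β·σ(x) < θ}, and Ũ = X \ (H̃ ∪ L̃). Suppose further that for every x ∈ X there is ε(x) > 0 with μ{ω | θ − ε(x)/2 < F x ω ≤ θ + ε(x)/2} = Φ(β). Let r̃^min(x) = min{pH(x), pL(x), 1 − Φ(β)}. Then μ{ω | F x ω > θ for all x ∈ H̃, F x ω ≤ θ for all x ∈ L̃, and θ − ε(x)/2 < F x ω ≤ θ + ε(x)/2 for all x ∈ Ũ} ≥ 1 − Σ_{x ∈ X} r̃^min(x). -/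

import Mathlib

open MeasureTheory ProbabilityTheory

lemma gauss_map_aux (s mm : ℝ) :
    (gaussianReal 0 1).map (fun x => s * x + mm) = gaussianReal mm (Real.toNNReal (s^2)) := by
  have h2 : Real.toNNReal (s^2) = ⟨s^2, sq_nonneg s⟩ := by
    ext; simp [Real.coe_toNNReal _ (sq_nonneg s)]; rfl
  have h1 : (gaussianReal 0 1).map (fun x => s * x) = gaussianReal 0 (Real.toNNReal (s^2)) := by
    rw [gaussianReal_map_const_mul, mul_zero, h2, mul_one]; rfl
  have hmm : Measurable (fun x : ℝ => s * x) := by fun_prop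
  have := Measure.map_map (μ := gaussianReal 0 1) (measurable_add_const mm) hmm
  rw [show ((· + mm) ∘ fun x : ℝ => s * x) = fun x => s * x + mm from rfl] at this
  rw [← this, h1, gaussianReal_map_add_const, zero_add]

lemma gauss_Iic_aux (s mm t : ℝ) (hs : 0 < s) :
    gaussianReal mm (Real.toNNReal (s^2)) (Set.Iic t)
      = gaussianReal 0 1 (Set.Iic ((t - mm)/s)) := by
  rw [← gauss_map_aux s mm, Measure.map_apply (by fun_prop) measurableSet_Iic]
  congr 1
  ext x
  simp only [Set.mem_preimage, Set.mem_Iic]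
  rw [le_div_iff₀ hs]
  constructor <;> intro h <;> nlinarith

lemma gauss_symm_aux (t : ℝ) :
    (gaussianReal 0 1 (Set.Iic (-t))).toReal = 1 - (gaussianReal 0 1 (Set.Iic t)).toReal := by
  have hmap : (gaussianReal 0 1).map (fun x : ℝ => (-1) * x) = gaussianReal 0 1 := by
    rw [gaussianReal_map_const_mul, mul_zero]
    congr 1
    ext; simp
  have h1 : gaussianReal 0 1 (Set.Iic (-t)) = gaussianReal 0 1 (Set.Ici t) := by
    conv_lhs => rw [← hmap]
    rw [Measure.map_apply (by fun_prop) measurableSet_Iic]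
    congr 1
    ext x; simp only [Set.mem_preimage, Set.mem_Iic, Set.mem_Ici]
    constructor <;> intro h <;> linarith
  have hsing : gaussianReal 0 1 {t} = 0 := by
    refine (gaussianReal_absolutelyContinuous 0 (by norm_num)) ?_
    simp
  have h2 : gaussianReal 0 1 (Set.Ici t) = 1 - gaussianReal 0 1 (Set.Iic t) := by
    have hc : Set.Ici t = (Set.Iio t)ᶜ := by ext x; simp [not_lt]
    rw [hc, measure_compl measurableSet_Iio (measure_ne_top _ _), measure_univ]
    congr 1
    have hu : Set.Iic t = Set.Iio t ∪ {t} := by ext x; simp [le_iff_lt_or_eq]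
    rw [hu, measure_union (by simp) (by simp), hsing, add_zero]
  rw [h1, h2, ENNReal.toReal_sub_of_le prob_le_one (by simp)]
  simp

theorem stmt_5
    {Ω : Type*} [MeasurableSpace Ω] (μ : Measure Ω) [IsProbabilityMeasure μ]
    {X : Type*} [Fintype X]
    (θ : ℝ)
    (m σ : X → ℝ) (hσ : ∀ x, 0 < σ x)
    (F : X → Ω → ℝ) (hF : ∀ x, Measurable (F x))
    (hlaw : ∀ x, μ.map (F x) = gaussianReal (m x) (Real.toNNReal ((σ x) ^ 2)))
    (Φ : ℝ → ℝ) (hΦ : ∀ t, Φ t = cdf (gaussianReal 0 1) t)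
    (β : ℝ) (hβ : 1 / 2 < Φ β)
    (pH pL rtmin : X → ℝ)
    (hpH : ∀ x, pH x = (μ {ω | θ < F x ω}).toReal)
    (hpL : ∀ x, pL x = (μ {ω | F x ω ≤ θ}).toReal)
    (hrtmin : ∀ x, rtmin x = min (pH x) (min (pL x) (1 - Φ β)))
    (H L U : Finset X)
    (hH : ∀ x, x ∈ H ↔ θ < m x - β * σ x)
    (hL : ∀ x, x ∈ L ↔ m x + β * σ x < θ)
    (hU : ∀ x, x ∈ U ↔ x ∉ H ∧ x ∉ L)
    (ε : X → ℝ) (hε : ∀ x, 0 < ε x)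
    (hεΦ : ∀ x, (μ {ω | θ - ε x / 2 < F x ω ∧ F x ω ≤ θ + ε x / 2}).toReal = Φ β) :
    1 - ∑ x, rtmin x ≤
      (μ {ω | (∀ x ∈ H, θ < F x ω) ∧ (∀ x ∈ L, F x ω ≤ θ) ∧
              (∀ x ∈ U, θ - ε x / 2 < F x ω ∧ F x ω ≤ θ + ε x / 2)}).toReal := by
  classical
  -- basic facts about Φ
  have hΦt : ∀ t, Φ t = (gaussianReal 0 1 (Set.Iic t)).toReal := by
    intro t; rw [hΦ, cdf_eq_real]; rfl
  have hΦmono : Monotone Φ := by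
    intro a b hab; rw [hΦ, hΦ]; exact monotone_cdf _ hab
  have hΦneg : ∀ t, Φ (-t) = 1 - Φ t := by
    intro t; rw [hΦt, hΦt, gauss_symm_aux]
  have hβpos : 0 < β := by
    by_contra hc
    push_neg at hc
    have h0 : Φ 0 = 1/2 := by
      have := hΦneg 0
      rw [neg_zero] at this
      linarith
    have := hΦmono hc
    rw [h0] at this
    linarith
  -- values of pL, pH
  have hpLval : ∀ x, pL x = Φ ((θ - m x) / σ x) := by
    intro x
    rw [hpL, hΦt]
    have hset : {ω | F x ω ≤ θ} = F x ⁻¹' Set.Iic θ := rfl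
    rw [hset, ← Measure.map_apply (hF x) measurableSet_Iic, hlaw x,
      gauss_Iic_aux _ _ _ (hσ x)]
  have hmeasle : ∀ x, MeasurableSet {ω | F x ω ≤ θ} :=
    fun x => measurableSet_le (hF x) measurable_const
  have hcompl : ∀ (s : Set Ω), MeasurableSet s → (μ sᶜ).toReal = 1 - (μ s).toReal := by
    intro s hs
    rw [measure_compl hs (measure_ne_top _ _), measure_univ,
      ENNReal.toReal_sub_of_le prob_le_one (by simp)]
    simp
  have hpHval : ∀ x, pH x = 1 - pL x := by
    intro x
    rw [hpH, hpL]
    have hset : {ω | θ < F x ω} = {ω | F x ω ≤ θ}ᶜ := by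
      ext ω; simp [not_le]
    rw [hset, hcompl _ (hmeasle x)]
  -- disjointness of H and L
  have hHL : ∀ x, x ∈ H → x ∉ L := by
    intro x hxH hxL
    have h1 := (hH x).1 hxH
    have h2 := (hL x).1 hxL
    nlinarith [hσ x]
  -- the per-coordinate events
  set A : X → Set Ω := fun x =>
    if x ∈ H then {ω | θ < F x ω}
    else if x ∈ L then {ω | F x ω ≤ θ}
    else {ω | θ - ε x / 2 < F x ω ∧ F x ω ≤ θ + ε x / 2} with hA
  have hAmeas : ∀ x, MeasurableSet (A x) := by
    intro x
    rw [hA]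
    dsimp only
    split_ifs
    · exact measurableSet_lt measurable_const (hF x)
    · exact hmeasle x
    · exact (measurableSet_lt measurable_const (hF x)).inter
        (measurableSet_le (hF x) measurable_const)
  -- per-coordinate bound
  have key : ∀ x, (μ (A x)ᶜ).toReal ≤ rtmin x := by
    intro x
    by_cases hxH : x ∈ H
    · have hset : (A x)ᶜ = {ω | F x ω ≤ θ} := by
        rw [hA]; dsimp only; rw [if_pos hxH]; ext ω; simp [not_lt]
      rw [hset, ← hpL]
      have hθ := (hH x).1 hxH
      have hle : (θ - m x) / σ x ≤ -β := by
        rw [div_le_iff₀ (hσ x)]; nlinarith [hσ x]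
      have hkey : pL x ≤ 1 - Φ β := by
        rw [hpLval]
        calc Φ ((θ - m x) / σ x) ≤ Φ (-β) := hΦmono hle
        _ = 1 - Φ β := hΦneg β
      rw [hrtmin]
      refine le_min ?_ (le_min le_rfl hkey)
      rw [hpHval]
      linarith
    · by_cases hxL : x ∈ L
      · have hset : (A x)ᶜ = {ω | θ < F x ω} := by
          rw [hA]; dsimp only; rw [if_neg hxH, if_pos hxL]; ext ω; simp [not_le]
        rw [hset, ← hpH]
        have hθ := (hL x).1 hxL
        have hle : β ≤ (θ - m x) / σ x := by
          rw [le_div_iff₀ (hσ x)]; nlinarith [hσ x]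
        have hkey : Φ β ≤ pL x := by rw [hpLval]; exact hΦmono hle
        rw [hrtmin]
        refine le_min le_rfl (le_min ?_ ?_) <;> rw [hpHval] <;> linarith
      · have hset : A x = {ω | θ - ε x / 2 < F x ω ∧ F x ω ≤ θ + ε x / 2} := by
          rw [hA]; dsimp only; rw [if_neg hxH, if_neg hxL]
        have hval : (μ (A x)ᶜ).toReal = 1 - Φ β := by
          rw [hcompl _ (hAmeas x), hset, hεΦ]
        rw [hval, hrtmin]
        have h1 : ¬ θ < m x - β * σ x := fun hc => hxH ((hH x).2 hc)
        have h2 : ¬ m x + β * σ x < θ := fun hc => hxL ((hL x).2 hc)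
        push_neg at h1 h2
        have hle1 : -β ≤ (θ - m x) / σ x := by
          rw [le_div_iff₀ (hσ x)]; nlinarith [hσ x]
        have hle2 : (θ - m x) / σ x ≤ β := by
          rw [div_le_iff₀ (hσ x)]; nlinarith [hσ x]
        have hk1 : 1 - Φ β ≤ pL x := by
          rw [hpLval, ← hΦneg]; exact hΦmono hle1
        have hk2 : pL x ≤ Φ β := by rw [hpLval]; exact hΦmono hle2
        refine le_min ?_ (le_min hk1 le_rfl)
        rw [hpHval]; linarith
  -- the target set is the intersection of the A x
  have hSeq : {ω | (∀ x ∈ H, θ < F x ω) ∧ (∀ x ∈ L, F x ω ≤ θ) ∧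
      (∀ x ∈ U, θ - ε x / 2 < F x ω ∧ F x ω ≤ θ + ε x / 2)} = ⋂ x, A x := by
    ext ω
    simp only [Set.mem_iInter, Set.mem_setOf_eq]
    constructor
    · rintro ⟨h1, h2, h3⟩ x
      rw [hA]; dsimp only
      split_ifs with hxH hxL
      · exact h1 x hxH
      · exact h2 x hxL
      · exact h3 x ((hU x).2 ⟨hxH, hxL⟩)
    · intro h
      refine ⟨fun x hx => ?_, fun x hx => ?_, fun x hx => ?_⟩
      · have hx' := h x
        rw [hA] at hx'; dsimp only at hx'; rw [if_pos hx] at hx'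
        exact hx'
      · have hx' := h x
        have hxH : x ∉ H := fun hc => hHL x hc hx
        rw [hA] at hx'; dsimp only at hx'; rw [if_neg hxH, if_pos hx] at hx'
        exact hx'
      · have hx' := h x
        obtain ⟨hxH, hxL⟩ := (hU x).1 hx
        rw [hA] at hx'; dsimp only at hx'; rw [if_neg hxH, if_neg hxL] at hx'
        exact hx'
  rw [hSeq]
  -- union bound
  have hIm : MeasurableSet (⋂ x, A x) := MeasurableSet.iInter fun x => hAmeas x
  have hunion : (μ (⋂ x, A x)ᶜ).toReal ≤ ∑ x, rtmin x := by
    have h1 : μ (⋂ x, A x)ᶜ ≤ ∑ x, μ (A x)ᶜ := by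
      rw [Set.compl_iInter]
      exact measure_iUnion_fintype_le _ _
    have h2 : (μ (⋂ x, A x)ᶜ).toReal ≤ ∑ x, (μ (A x)ᶜ).toReal := by
      rw [← ENNReal.toReal_sum (fun x _ => measure_ne_top _ _)]
      exact ENNReal.toReal_mono (ENNReal.sum_ne_top.2 fun x _ => measure_ne_top _ _) h1
    exact h2.trans (Finset.sum_le_sum fun x _ => key x)
  have := hcompl _ hIm
  linarith
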